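/- Let H be a real Hilbert space, let 0<α≤1 and 0<ν≤1, let t>0, and let φ:(0,t)→H be square-integrable. Then 𝓘^α(‖𝓘φ‖²)(t) ≤ ω_{2−ν}(t) · 𝓘^{1+α−ν}(‖𝓘^ν φ‖²)(t), where ‖𝓘φ‖² denotes the scalar function s ↦ ‖(𝓘φ)(s)‖² and ‖𝓘^ν φ‖² denotes s ↦ ‖(𝓘^ν φ)(s)‖². -/

import Mathlib

open MeasureTheory intervalIntegral

/-- The Riemann–Liouville kernel `ω_α(t) = t^(α-1)/Γ(α)`. -/
noncomputable def rlKernel (α t : ℝ) : ℝ := t ^ (α - 1) / Real.Gamma α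

/-- The Riemann–Liouville fractional integral `(𝓘^α φ)(t) = ∫₀ᵗ ω_α(t-s) φ(s) ds`. -/
noncomputable def fracInt {H : Type*} [NormedAddCommGroup H] [NormedSpace ℝ H]
    (α : ℝ) (φ : ℝ → H) (t : ℝ) : H :=
  ∫ s in (0:ℝ)..t, rlKernel α (t - s) • φ s

open Set

lemma rlKernel_one (x : ℝ) : rlKernel 1 x = 1 := by
  simp [rlKernel, Real.Gamma_one]

lemma rlKernel_nonneg {a : ℝ} (ha : 0 < a) {x : ℝ} (hx : 0 ≤ x) : 0 ≤ rlKernel a x :=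
  div_nonneg (Real.rpow_nonneg hx _) (Real.Gamma_pos_of_pos ha).le

lemma rlKernel_mono {a : ℝ} (ha : 1 ≤ a) {x y : ℝ} (hx : 0 ≤ x) (hxy : x ≤ y) :
    rlKernel a x ≤ rlKernel a y := by
  have hΓ : 0 < Real.Gamma a := Real.Gamma_pos_of_pos (by linarith)
  exact div_le_div_of_nonneg_right (Real.rpow_le_rpow hx hxy (by linarith)) hΓ.le

lemma betaReal {a b : ℝ} (ha : 0 < a) (hb : 0 < b) :
    ∫ x in (0:ℝ)..1, x ^ (a - 1) * (1 - x) ^ (b - 1)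
      = Real.Gamma a * Real.Gamma b / Real.Gamma (a + b) := by
  have h := Complex.Gamma_mul_Gamma_eq_betaIntegral (s := (a:ℂ)) (t := (b:ℂ))
    (by simpa using ha) (by simpa using hb)
  have hbeta : Complex.betaIntegral (a:ℂ) (b:ℂ)
      = ((∫ x in (0:ℝ)..1, x ^ (a - 1) * (1 - x) ^ (b - 1) : ℝ) : ℂ) := by
    rw [Complex.betaIntegral, ← intervalIntegral.integral_ofReal]
    apply intervalIntegral.integral_congr
    intro x hx
    rw [Set.uIcc_of_le (by norm_num : (0:ℝ) ≤ 1)] at hx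
    have hx0 : (0:ℝ) ≤ x := hx.1
    have hx1 : (0:ℝ) ≤ 1 - x := by linarith [hx.2]
    dsimp only
    rw [show ((a:ℂ) - 1) = ((a - 1 : ℝ) : ℂ) by push_cast; ring,
      show ((b:ℂ) - 1) = ((b - 1 : ℝ) : ℂ) by push_cast; ring,
      show (1 - (x:ℂ)) = ((1 - x : ℝ) : ℂ) by push_cast; ring,
      ← Complex.ofReal_cpow hx0, ← Complex.ofReal_cpow hx1, ← Complex.ofReal_mul]
  rw [hbeta] at h
  have hG : ∀ c : ℝ, Complex.Gamma (c:ℂ) = (Real.Gamma c : ℂ) := fun c => Complex.Gamma_ofReal c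
  rw [show ((a:ℂ) + b) = ((a + b : ℝ) : ℂ) by push_cast; ring] at h
  rw [hG, hG, hG] at h
  have h' : Real.Gamma a * Real.Gamma b
      = Real.Gamma (a + b) * ∫ x in (0:ℝ)..1, x ^ (a - 1) * (1 - x) ^ (b - 1) := by
    exact_mod_cast h
  have hΓ : Real.Gamma (a + b) ≠ 0 := (Real.Gamma_pos_of_pos (by linarith)).ne'
  field_simp
  linarith [h']

lemma rlKernel_measurable (a : ℝ) : Measurable (rlKernel a) := by
  unfold rlKernel; fun_prop

lemma betaInt {a b c : ℝ} (ha : 0 < a) (hb : 0 < b) (hc : 0 < c) :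
    IntervalIntegrable (fun x => (c - x) ^ (a - 1) * x ^ (b - 1)) volume 0 c := by
  have h1 : IntervalIntegrable (fun x : ℝ => x ^ (b - 1)) volume 0 (c / 2) :=
    intervalIntegral.intervalIntegrable_rpow' (by linarith)
  have h2 : IntervalIntegrable (fun x : ℝ => x ^ (a - 1)) volume 0 (c / 2) :=
    intervalIntegral.intervalIntegrable_rpow' (by linarith)
  have hleft : IntervalIntegrable (fun x => (c - x) ^ (a - 1) * x ^ (b - 1)) volume 0 (c / 2) := by
    refine h1.continuousOn_mul ?_
    refine ContinuousOn.rpow_const (by fun_prop) ?_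
    intro x hx
    rw [Set.uIcc_of_le (by linarith : (0:ℝ) ≤ c / 2)] at hx
    left; intro h; nlinarith [hx.2]
  have hright : IntervalIntegrable (fun x => (c - x) ^ (a - 1) * x ^ (b - 1)) volume (c / 2) c := by
    have h3 : IntervalIntegrable (fun x : ℝ => (c - x) ^ (a - 1)) volume (c / 2) c := by
      have := (h2.comp_sub_left c).symm
      rw [show c - 0 = c by ring, show c - c / 2 = c / 2 by ring] at this
      exact this
    refine h3.mul_continuousOn ?_
    refine ContinuousOn.rpow_const (by fun_prop) ?_
    intro x hx
    rw [Set.uIcc_of_le (by linarith : c / 2 ≤ c)] at hx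
    left; intro h; nlinarith [hx.1]
  exact hleft.trans hright

lemma rlConv {a b c : ℝ} (ha : 0 < a) (hb : 0 < b) (hc : 0 < c) :
    ∫ r in (0:ℝ)..c, rlKernel a (c - r) * rlKernel b r = rlKernel (a + b) c := by
  have hΓa := Real.Gamma_pos_of_pos ha
  have hΓb := Real.Gamma_pos_of_pos hb
  have hΓab := Real.Gamma_pos_of_pos (by linarith : 0 < a + b)
  have heq : (fun r : ℝ => rlKernel a (c - r) * rlKernel b r)
      = fun r : ℝ => (Real.Gamma a * Real.Gamma b)⁻¹ * ((c - r) ^ (a - 1) * r ^ (b - 1)) := by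
    funext r; simp only [rlKernel, div_eq_mul_inv, mul_inv]; ring
  rw [heq, intervalIntegral.integral_const_mul]
  have hsub := intervalIntegral.integral_comp_mul_left
    (a := 0) (b := 1) (c := c) (fun r : ℝ => (c - r) ^ (a - 1) * r ^ (b - 1)) hc.ne'
  rw [mul_zero, mul_one] at hsub
  have hcongr : ∫ x in (0:ℝ)..1, (c - c * x) ^ (a - 1) * (c * x) ^ (b - 1)
      = c ^ (a - 1) * c ^ (b - 1) * ∫ x in (0:ℝ)..1, x ^ (b - 1) * (1 - x) ^ (a - 1) := by
    rw [← intervalIntegral.integral_const_mul]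
    apply intervalIntegral.integral_congr
    intro x hx
    rw [Set.uIcc_of_le (by norm_num : (0:ℝ) ≤ 1)] at hx
    have h1 : (0:ℝ) ≤ 1 - x := by linarith [hx.2]
    have h2 : c - c * x = c * (1 - x) := by ring
    dsimp only
    rw [h2, Real.mul_rpow hc.le h1, Real.mul_rpow hc.le hx.1]
    ring
  rw [betaReal hb ha] at hcongr
  have hstep : ∫ r in (0:ℝ)..c, (c - r) ^ (a - 1) * r ^ (b - 1)
      = c * ∫ x in (0:ℝ)..1, (c - c * x) ^ (a - 1) * (c * x) ^ (b - 1) := by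
    rw [hsub, smul_eq_mul, ← mul_assoc, mul_inv_cancel₀ hc.ne', one_mul]
  rw [hstep, hcongr]
  have hpow : c * (c ^ (a - 1) * c ^ (b - 1)) = c ^ (a + b - 1) := by
    rw [show a + b - 1 = 1 + (a - 1) + (b - 1) by ring, Real.rpow_add hc,
      Real.rpow_add hc, Real.rpow_one]
    ring
  rw [show c * (c ^ (a-1) * c ^ (b-1) * (Real.Gamma b * Real.Gamma a / Real.Gamma (b + a)))
      = c * (c ^ (a-1) * c ^ (b-1)) * (Real.Gamma b * Real.Gamma a / Real.Gamma (b + a)) by ring,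
    hpow, rlKernel, add_comm b a]
  field_simp

lemma rlConv_shift {a b u s : ℝ} (ha : 0 < a) (hb : 0 < b) (h : u < s) :
    ∫ r in u..s, rlKernel a (s - r) * rlKernel b (r - u) = rlKernel (a + b) (s - u) := by
  have key := intervalIntegral.integral_comp_sub_right
    (a := u) (b := s) (fun r : ℝ => rlKernel a (s - u - r) * rlKernel b r) u
  simp only [show ∀ x : ℝ, s - u - (x - u) = s - x from fun x => by ring, sub_self] at key
  rw [key]
  exact rlConv ha hb (by linarith)

lemma rlConv_intble {a b u s : ℝ} (ha : 0 < a) (hb : 0 < b) (h : u < s) :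
    IntervalIntegrable (fun r => rlKernel a (s - r) * rlKernel b (r - u)) volume u s := by
  have base := ((betaInt ha hb (by linarith : (0:ℝ) < s - u)).const_mul
    ((Real.Gamma a * Real.Gamma b)⁻¹)).comp_sub_right u
  rw [zero_add, sub_add_cancel] at base
  have heq : (fun x : ℝ => (Real.Gamma a * Real.Gamma b)⁻¹
        * ((s - u - (x - u)) ^ (a - 1) * (x - u) ^ (b - 1)))
      = fun x : ℝ => rlKernel a (s - x) * rlKernel b (x - u) := by
    funext x
    simp only [rlKernel, div_eq_mul_inv, mul_inv, show s - u - (x - u) = s - x from by ring]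
    ring
  rw [heq] at base
  exact base

lemma rlConvL {a b u s : ℝ} (ha : 0 < a) (hb : 0 < b) (h : u < s) :
    ∫⁻ r in Set.Ioo u s, ENNReal.ofReal (rlKernel a (s - r) * rlKernel b (r - u))
      = ENNReal.ofReal (rlKernel (a + b) (s - u)) := by
  have hint : IntegrableOn (fun r => rlKernel a (s - r) * rlKernel b (r - u)) (Ioo u s) volume :=
    (intervalIntegrable_iff_integrableOn_Ioo_of_le h.le).1 (rlConv_intble ha hb h)
  rw [← ofReal_integral_eq_lintegral_ofReal hint ?_]
  · congr 1
    rw [setIntegral_congr_set MeasureTheory.Ioo_ae_eq_Ioc,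
      ← intervalIntegral.integral_of_le h.le]
    exact rlConv_shift ha hb h
  · filter_upwards [ae_restrict_mem measurableSet_Ioo] with r hr
    exact mul_nonneg (rlKernel_nonneg ha (by linarith [hr.2]))
      (rlKernel_nonneg hb (by linarith [hr.1]))

lemma lintegral_CS {μ : Measure ℝ} {k f : ℝ → ENNReal} (hk : AEMeasurable k μ)
    (hf : AEMeasurable f μ) :
    (∫⁻ x, k x * f x ∂μ) ^ 2 ≤ (∫⁻ x, k x ∂μ) * ∫⁻ x, k x * f x ^ 2 ∂μ := by
  have hpq : (2:ℝ).HolderConjugate 2 := Real.HolderConjugate.two_two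
  have h1 : ∀ x, k x * f x = (k x ^ (1/2 : ℝ)) * ((k x ^ (1/2 : ℝ)) * f x) := by
    intro x
    rw [← mul_assoc, ← ENNReal.rpow_add_of_nonneg (x := k x) _ _ (by norm_num) (by norm_num)]
    norm_num
  have hmeas1 : AEMeasurable (fun x => k x ^ (1/2 : ℝ)) μ := hk.pow_const _
  have hmeas2 : AEMeasurable (fun x => (k x ^ (1/2 : ℝ)) * f x) μ := hmeas1.mul hf
  have key := ENNReal.lintegral_mul_le_Lp_mul_Lq μ hpq hmeas1 hmeas2
  simp only [Pi.mul_apply] at key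
  have e1 : ∀ x : ℝ, (k x ^ (1/2:ℝ)) ^ (2:ℝ) = k x := by
    intro x
    rw [← ENNReal.rpow_mul]
    norm_num
  have e2 : ∀ x : ℝ, ((k x ^ (1/2:ℝ)) * f x) ^ (2:ℝ) = k x * f x ^ 2 := by
    intro x
    rw [ENNReal.mul_rpow_of_nonneg _ _ (by norm_num : (0:ℝ) ≤ 2), ← ENNReal.rpow_mul,
      show (1/2:ℝ) * 2 = 1 by norm_num, ENNReal.rpow_one,
      show (2:ℝ) = ((2:ℕ):ℝ) by norm_num, ENNReal.rpow_natCast]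
  simp only [e1, e2] at key
  calc (∫⁻ x, k x * f x ∂μ) ^ 2
      ≤ ((∫⁻ x, k x ∂μ) ^ (1/(2:ℝ)) * (∫⁻ x, k x * f x ^ 2 ∂μ) ^ (1/(2:ℝ))) ^ 2 := by
        have := key
        simp only [h1] at this ⊢
        exact pow_le_pow_left' this 2
    _ = (∫⁻ x, k x ∂μ) * ∫⁻ x, k x * f x ^ 2 ∂μ := by
        rw [mul_pow, ← ENNReal.rpow_natCast ((∫⁻ x, k x ∂μ) ^ (1/(2:ℝ))) 2,
          ← ENNReal.rpow_natCast ((∫⁻ x, k x * f x ^ 2 ∂μ) ^ (1/(2:ℝ))) 2,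
          ← ENNReal.rpow_mul, ← ENNReal.rpow_mul]
        norm_num

lemma fracInt_aestronglyMeasurable {H : Type*} [NormedAddCommGroup H] [NormedSpace ℝ H]
    (a : ℝ) (G : ℝ → H) (hGm : StronglyMeasurable G) :
    AEStronglyMeasurable (fracInt a G) (volume.restrict (Set.Ioi 0)) := by
  set q : ℝ × ℝ → H := fun p =>
    Set.indicator {p : ℝ × ℝ | 0 < p.2 ∧ p.2 ≤ p.1} (fun p => rlKernel a (p.1 - p.2) • G p.2) p
    with hq
  have hset : MeasurableSet {p : ℝ × ℝ | 0 < p.2 ∧ p.2 ≤ p.1} :=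
    (measurableSet_lt measurable_const measurable_snd).inter
      (measurableSet_le measurable_snd measurable_fst)
  have hqm : StronglyMeasurable q :=
    ((((rlKernel_measurable a).comp (measurable_fst.sub measurable_snd)).stronglyMeasurable).smul
      (hGm.comp_measurable measurable_snd)).indicator hset
  have hFm : StronglyMeasurable (fun r => ∫ u, q (r, u)) := hqm.integral_prod_right'
  refine hFm.aestronglyMeasurable.congr ?_
  rw [Filter.EventuallyEq, ae_restrict_iff' measurableSet_Ioi]
  refine ae_of_all _ fun r hr => ?_
  have hr0 : (0:ℝ) < r := hr
  have hind : (fun u => q (r, u))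
      = Set.indicator (Set.Ioc 0 r) (fun u => rlKernel a (r - u) • G u) := by
    funext u
    by_cases h : u ∈ Set.Ioc 0 r
    · rw [Set.indicator_of_mem h]
      exact Set.indicator_of_mem (by exact ⟨h.1, h.2⟩) _
    · rw [Set.indicator_of_notMem h]
      exact Set.indicator_of_notMem (by simpa [Set.mem_Ioc] using h) _
  show (∫ u, q (r, u)) = fracInt a G r
  rw [hind, MeasureTheory.integral_indicator measurableSet_Ioc, fracInt,
    intervalIntegral.integral_of_le hr0.le]

lemma lintegral_triangle_swap {t : ℝ} (F : ℝ → ℝ → ENNReal)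
    (hF : AEMeasurable (fun p : ℝ × ℝ => F p.1 p.2)
      ((volume.restrict (Set.Ioo 0 t)).prod (volume.restrict (Set.Ioo 0 t)))) :
    ∫⁻ s in Set.Ioo 0 t, ∫⁻ r in Set.Ioo 0 s, F s r
      = ∫⁻ r in Set.Ioo 0 t, ∫⁻ s in Set.Ioo r t, F s r := by
  set μt := volume.restrict (Set.Ioo 0 t) with hμt
  set f : ℝ → ℝ → ENNReal := fun s r =>
    Set.indicator {p : ℝ × ℝ | p.2 < p.1} (fun p => F p.1 p.2) (s, r) with hf
  have hfm : AEMeasurable (Function.uncurry f) (μt.prod μt) := by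
    have huncurry : Function.uncurry f
        = Set.indicator {p : ℝ × ℝ | p.2 < p.1} (fun p => F p.1 p.2) := by
      funext p; cases p; rfl
    rw [huncurry]
    exact hF.indicator (measurableSet_lt measurable_snd measurable_fst)
  have swap := lintegral_lintegral_swap hfm
  have hL : ∫⁻ s in Set.Ioo 0 t, ∫⁻ r in Set.Ioo 0 s, F s r
      = ∫⁻ s, ∫⁻ r, f s r ∂μt ∂μt := by
    apply lintegral_congr_ae
    filter_upwards [ae_restrict_mem measurableSet_Ioo] with s hs
    have hind : (fun r => f s r) = Set.indicator (Set.Iio s) (fun r => F s r) := by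
      funext r
      simp only [hf, Set.indicator, Set.mem_setOf_eq, Set.mem_Iio]
    have hset_eq : Set.Iio s ∩ Set.Ioo 0 t = Set.Ioo 0 s := by
      ext x
      simp only [Set.mem_inter_iff, Set.mem_Iio, Set.mem_Ioo]
      constructor
      · rintro ⟨h1, h2, h3⟩; exact ⟨h2, h1⟩
      · rintro ⟨h1, h2⟩; exact ⟨h2, h1, by linarith [hs.2]⟩
    have : ∫⁻ r, f s r ∂μt = ∫⁻ r in Set.Ioo 0 s, F s r := by
      rw [hind, lintegral_indicator measurableSet_Iio, hμt,
        Measure.restrict_restrict measurableSet_Iio, hset_eq]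
    exact this.symm
  have hR : ∫⁻ r, ∫⁻ s, f s r ∂μt ∂μt
      = ∫⁻ r in Set.Ioo 0 t, ∫⁻ s in Set.Ioo r t, F s r := by
    apply lintegral_congr_ae
    filter_upwards [ae_restrict_mem measurableSet_Ioo] with r hr
    have hind : (fun s => f s r) = Set.indicator (Set.Ioi r) (fun s => F s r) := by
      funext s
      simp only [hf, Set.indicator, Set.mem_setOf_eq, Set.mem_Ioi]
    have hset_eq : Set.Ioi r ∩ Set.Ioo 0 t = Set.Ioo r t := by
      ext x
      simp only [Set.mem_inter_iff, Set.mem_Ioi, Set.mem_Ioo]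
      constructor
      · rintro ⟨h1, h2, h3⟩; exact ⟨h1, h3⟩
      · rintro ⟨h1, h2⟩; exact ⟨h1, by linarith [hr.1], h2⟩
    rw [hind, lintegral_indicator measurableSet_Ioi, hμt,
      Measure.restrict_restrict measurableSet_Ioi, hset_eq]
  rw [hL, swap, hR]

lemma normsq_integral_le {H : Type*} [NormedAddCommGroup H] [NormedSpace ℝ H]
    {b s : ℝ} (hb : 0 < b) (hs : 0 < s) (f : ℝ → H)
    (hf : AEStronglyMeasurable f (volume.restrict (Set.Ioo 0 s))) :
    (‖∫ r in Set.Ioc 0 s, rlKernel b (s - r) • f r‖₊ : ENNReal) ^ 2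
      ≤ ENNReal.ofReal (rlKernel (b + 1) s)
        * ∫⁻ r in Set.Ioo 0 s, ENNReal.ofReal (rlKernel b (s - r)) * (‖f r‖₊ : ENNReal) ^ 2 := by
  have hkmeas : Measurable (fun r => ENNReal.ofReal (rlKernel b (s - r))) :=
    (ENNReal.measurable_ofReal.comp ((rlKernel_measurable b).comp (measurable_const.sub measurable_id)))
  have h1 : (‖∫ r in Set.Ioc 0 s, rlKernel b (s - r) • f r‖₊ : ENNReal)
      ≤ ∫⁻ r in Set.Ioo 0 s, ENNReal.ofReal (rlKernel b (s - r)) * (‖f r‖₊ : ENNReal) := by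
    refine le_trans (enorm_integral_le_lintegral_enorm _) ?_
    rw [← Measure.restrict_congr_set MeasureTheory.Ioo_ae_eq_Ioc]
    apply le_of_eq
    apply lintegral_congr_ae
    filter_upwards [ae_restrict_mem measurableSet_Ioo] with r hr
    rw [enorm_smul,
      Real.enorm_eq_ofReal (rlKernel_nonneg hb (by linarith [hr.2])), enorm_eq_nnnorm]
  have h2 := lintegral_CS (μ := volume.restrict (Set.Ioo 0 s))
    (k := fun r => ENNReal.ofReal (rlKernel b (s - r)))
    (f := fun r => (‖f r‖₊ : ENNReal)) hkmeas.aemeasurable hf.enorm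
  have h3 : ∫⁻ r in Set.Ioo 0 s, ENNReal.ofReal (rlKernel b (s - r))
      = ENNReal.ofReal (rlKernel (b + 1) s) := by
    have hconv := rlConvL (a := b) (b := 1) (u := 0) (s := s) hb one_pos hs
    rw [sub_zero] at hconv
    rw [← hconv]
    apply lintegral_congr_ae
    filter_upwards [] with r
    rw [rlKernel_one, mul_one]
  calc (‖∫ r in Set.Ioc 0 s, rlKernel b (s - r) • f r‖₊ : ENNReal) ^ 2
      ≤ (∫⁻ r in Set.Ioo 0 s, ENNReal.ofReal (rlKernel b (s - r)) * (‖f r‖₊ : ENNReal)) ^ 2 :=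
        pow_le_pow_left' h1 2
    _ ≤ (∫⁻ r in Set.Ioo 0 s, ENNReal.ofReal (rlKernel b (s - r)))
        * ∫⁻ r in Set.Ioo 0 s, ENNReal.ofReal (rlKernel b (s - r)) * (‖f r‖₊ : ENNReal) ^ 2 := h2
    _ = ENNReal.ofReal (rlKernel (b + 1) s)
        * ∫⁻ r in Set.Ioo 0 s, ENNReal.ofReal (rlKernel b (s - r)) * (‖f r‖₊ : ENNReal) ^ 2 := by
        rw [h3]

lemma fracInt_semigroup {H : Type*} [NormedAddCommGroup H] [NormedSpace ℝ H] [CompleteSpace H]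
    {ν s : ℝ} (hν : 0 < ν) (hν1 : ν < 1) (hs : 0 < s)
    (G : ℝ → H) (hGm : StronglyMeasurable G) (hGi : Integrable G) :
    fracInt 1 G s = ∫ r in Set.Ioc 0 s, rlKernel (1 - ν) (s - r) • fracInt ν G r := by
  set μs := volume.restrict (Set.Ioc 0 s) with hμs
  set f : ℝ → ℝ → H := fun r u =>
    Set.indicator (Set.Ioc 0 r)
      (fun u => (rlKernel (1 - ν) (s - r) * rlKernel ν (r - u)) • G u) u with hfdef
  -- joint strong measurability
  have hset : MeasurableSet {p : ℝ × ℝ | 0 < p.2 ∧ p.2 ≤ p.1} :=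
    (measurableSet_lt measurable_const measurable_snd).inter
      (measurableSet_le measurable_snd measurable_fst)
  have huncurry : Function.uncurry f = Set.indicator {p : ℝ × ℝ | 0 < p.2 ∧ p.2 ≤ p.1}
      (fun p => (rlKernel (1 - ν) (s - p.1) * rlKernel ν (p.1 - p.2)) • G p.2) := by
    funext p
    rcases p with ⟨r, u⟩
    simp only [Function.uncurry, hfdef, Set.indicator, Set.mem_Ioc, Set.mem_setOf_eq]
  have hum : StronglyMeasurable (Function.uncurry f) := by
    rw [huncurry]
    exact ((((rlKernel_measurable (1 - ν)).comp (measurable_const.sub measurable_fst)).mul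
      ((rlKernel_measurable ν).comp (measurable_fst.sub measurable_snd))).stronglyMeasurable.smul
      (hGm.comp_measurable measurable_snd)).indicator hset
  -- finiteness of the double integral of the norm
  have hfin : ∫⁻ p, (‖Function.uncurry f p‖₊ : ENNReal) ∂(μs.prod μs) < ⊤ := by
    rw [lintegral_prod_symm (fun p => (‖Function.uncurry f p‖₊ : ENNReal)) hum.enorm.aemeasurable]
    have hbound : ∀ᵐ u ∂μs, ∫⁻ r, (‖f r u‖₊ : ENNReal) ∂μs ≤ (‖G u‖₊ : ENNReal) := by
      have hae : ∀ᵐ u ∂μs, u ∈ Set.Ioo 0 s := by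
        rw [hμs, ← Measure.restrict_congr_set MeasureTheory.Ioo_ae_eq_Ioc]
        exact ae_restrict_mem measurableSet_Ioo
      filter_upwards [hae] with u hu
      have hu0 : 0 < u := hu.1
      have hus : u < s := hu.2
      have heq : ∀ᵐ r ∂μs, (‖f r u‖₊ : ENNReal)
          = Set.indicator (Set.Ici u)
            (fun r => ENNReal.ofReal (rlKernel (1 - ν) (s - r) * rlKernel ν (r - u))
              * (‖G u‖₊ : ENNReal)) r := by
        filter_upwards [ae_restrict_mem measurableSet_Ioc] with r hr
        by_cases h : u ≤ r
        · rw [hfdef]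
          simp only
          rw [Set.indicator_of_mem (Set.mem_Ioc.2 ⟨hu0, h⟩),
            Set.indicator_of_mem (Set.mem_Ici.2 h), nnnorm_smul, ENNReal.coe_mul,
            ← enorm_eq_nnnorm (rlKernel (1 - ν) (s - r) * rlKernel ν (r - u)),
            Real.enorm_eq_ofReal (mul_nonneg
              (rlKernel_nonneg (by linarith) (by linarith [hr.2]))
              (rlKernel_nonneg hν (by linarith)))]
        · rw [hfdef]
          simp only
          rw [Set.indicator_of_notMem (fun hc => h (Set.mem_Ioc.1 hc).2),
            Set.indicator_of_notMem (fun hc => h (Set.mem_Ici.1 hc))]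
          simp
      rw [lintegral_congr_ae heq, lintegral_indicator measurableSet_Ici, hμs,
        Measure.restrict_restrict measurableSet_Ici]
      have hIci : Set.Ici u ∩ Set.Ioc 0 s = Set.Icc u s := by
        ext x
        simp only [Set.mem_inter_iff, Set.mem_Ici, Set.mem_Ioc, Set.mem_Icc]
        constructor
        · rintro ⟨h1, h2, h3⟩; exact ⟨h1, h3⟩
        · rintro ⟨h1, h2⟩; exact ⟨h1, by linarith, h2⟩
      rw [hIci, ← Measure.restrict_congr_set MeasureTheory.Ioo_ae_eq_Icc,
        lintegral_mul_const' _ _ ENNReal.coe_ne_top, rlConvL (by linarith) hν hus,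
        show (1 - ν) + ν = 1 by ring, rlKernel_one]
      simp
    calc ∫⁻ u, ∫⁻ r, (‖f r u‖₊ : ENNReal) ∂μs ∂μs
        ≤ ∫⁻ u, (‖G u‖₊ : ENNReal) ∂μs := lintegral_mono_ae hbound
      _ < ⊤ := (hGi.restrict).2
  have hint : Integrable (Function.uncurry f) (μs.prod μs) := ⟨hum.aestronglyMeasurable, hfin⟩
  have swap := integral_integral_swap (f := f) hint
  -- identify the left-hand side of swap
  have hLHS : (∫ r, (∫ u, f r u ∂μs) ∂μs)
      = ∫ r in Set.Ioc 0 s, rlKernel (1 - ν) (s - r) • fracInt ν G r := by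
    apply MeasureTheory.integral_congr_ae
    filter_upwards [ae_restrict_mem measurableSet_Ioc] with r hr
    have hIoc : Set.Ioc 0 r ∩ Set.Ioc 0 s = Set.Ioc 0 r := by
      ext x
      simp only [Set.mem_inter_iff, Set.mem_Ioc]
      constructor
      · rintro ⟨h1, h2⟩; exact h1
      · rintro ⟨h1, h2⟩; exact ⟨⟨h1, h2⟩, h1, by linarith [hr.2]⟩
    rw [hfdef]
    simp only
    rw [MeasureTheory.integral_indicator measurableSet_Ioc, hμs,
      Measure.restrict_restrict measurableSet_Ioc, hIoc]
    have hsmul : ∀ u : ℝ, (rlKernel (1 - ν) (s - r) * rlKernel ν (r - u)) • G u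
        = rlKernel (1 - ν) (s - r) • (rlKernel ν (r - u) • G u) := fun u => mul_smul _ _ _
    simp_rw [hsmul]
    rw [MeasureTheory.integral_smul, fracInt, intervalIntegral.integral_of_le hr.1.le]
  -- identify the right-hand side of swap
  have hRHS : (∫ u, (∫ r, f r u ∂μs) ∂μs) = ∫ u in Set.Ioc 0 s, G u := by
    apply MeasureTheory.integral_congr_ae
    have hae : ∀ᵐ u ∂μs, u ∈ Set.Ioo 0 s := by
      rw [hμs, ← Measure.restrict_congr_set MeasureTheory.Ioo_ae_eq_Ioc]
      exact ae_restrict_mem measurableSet_Ioo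
    filter_upwards [hae] with u hu
    have hu0 : 0 < u := hu.1
    have hus : u < s := hu.2
    have heq : (fun r => f r u) = Set.indicator (Set.Ici u)
        (fun r => (rlKernel (1 - ν) (s - r) * rlKernel ν (r - u)) • G u) := by
      funext r
      by_cases h : u ≤ r
      · rw [hfdef]
        simp only
        rw [Set.indicator_of_mem (Set.mem_Ioc.2 ⟨hu0, h⟩),
          Set.indicator_of_mem (Set.mem_Ici.2 h)]
      · rw [hfdef]
        simp only
        rw [Set.indicator_of_notMem (fun hc => h (Set.mem_Ioc.1 hc).2),
          Set.indicator_of_notMem (fun hc => h (Set.mem_Ici.1 hc))]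
    rw [heq, MeasureTheory.integral_indicator measurableSet_Ici, hμs,
      Measure.restrict_restrict measurableSet_Ici]
    have hIci : Set.Ici u ∩ Set.Ioc 0 s = Set.Icc u s := by
      ext x
      simp only [Set.mem_inter_iff, Set.mem_Ici, Set.mem_Ioc, Set.mem_Icc]
      constructor
      · rintro ⟨h1, h2, h3⟩; exact ⟨h1, h3⟩
      · rintro ⟨h1, h2⟩; exact ⟨h1, by linarith, h2⟩
    rw [hIci, setIntegral_congr_set (MeasureTheory.Ioc_ae_eq_Icc).symm,
      _root_.integral_smul_const, ← intervalIntegral.integral_of_le hus.le,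
      rlConv_shift (by linarith) hν hus, show (1 - ν) + ν = 1 by ring, rlKernel_one, one_smul]
  -- conclude
  have hfrac1 : fracInt 1 G s = ∫ u in Set.Ioc 0 s, G u := by
    rw [fracInt, intervalIntegral.integral_of_le hs.le]
    apply setIntegral_congr_fun measurableSet_Ioc
    intro u _
    show rlKernel 1 (s - u) • G u = G u
    rw [rlKernel_one, one_smul]
  rw [hfrac1, ← hRHS, ← swap, hLHS]

lemma chain_bound {t c b : ℝ} (ht : 0 < t) (hc : 0 < c) (hb : 0 < b)
    (h : ℝ → ENNReal) (hh : AEMeasurable h (volume.restrict (Set.Ioo 0 t)))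
    (hhfin : ∀ x, h x ≠ ⊤) :
    ∫⁻ s in Set.Ioo 0 t, ENNReal.ofReal (rlKernel c (t - s))
        * ∫⁻ r in Set.Ioo 0 s, ENNReal.ofReal (rlKernel b (s - r)) * h r
      = ∫⁻ r in Set.Ioo 0 t, ENNReal.ofReal (rlKernel (c + b) (t - r)) * h r := by
  set F : ℝ → ℝ → ENNReal := fun s r =>
    ENNReal.ofReal (rlKernel c (t - s)) * (ENNReal.ofReal (rlKernel b (s - r)) * h r) with hF
  have hμt : SFinite (volume.restrict (Set.Ioo (0:ℝ) t)) := inferInstance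
  have hsnd : Measure.QuasiMeasurePreserving (Prod.snd : ℝ × ℝ → ℝ)
      ((volume.restrict (Set.Ioo 0 t)).prod (volume.restrict (Set.Ioo 0 t)))
      (volume.restrict (Set.Ioo 0 t)) := by
    refine ⟨measurable_snd, ?_⟩
    rw [Measure.map_snd_prod]
    exact Measure.AbsolutelyContinuous.mk fun s hs h0 => by
      simp [Measure.smul_apply, h0]
  have hFm : AEMeasurable (fun p : ℝ × ℝ => F p.1 p.2)
      ((volume.restrict (Set.Ioo 0 t)).prod (volume.restrict (Set.Ioo 0 t))) := by
    apply AEMeasurable.mul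
    · exact ((ENNReal.measurable_ofReal.comp ((rlKernel_measurable c).comp
        (measurable_const.sub measurable_fst)))).aemeasurable
    · apply AEMeasurable.mul
      · exact ((ENNReal.measurable_ofReal.comp ((rlKernel_measurable b).comp
          (measurable_fst.sub measurable_snd)))).aemeasurable
      · exact hh.comp_quasiMeasurePreserving hsnd
  have hswap := lintegral_triangle_swap F hFm
  have hL : ∫⁻ s in Set.Ioo 0 t, ENNReal.ofReal (rlKernel c (t - s))
        * ∫⁻ r in Set.Ioo 0 s, ENNReal.ofReal (rlKernel b (s - r)) * h r
      = ∫⁻ s in Set.Ioo 0 t, ∫⁻ r in Set.Ioo 0 s, F s r := by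
    apply lintegral_congr
    intro s
    rw [hF]
    simp only
    rw [← lintegral_const_mul' _ _ ENNReal.ofReal_ne_top]
  have hR : ∫⁻ r in Set.Ioo 0 t, ∫⁻ s in Set.Ioo r t, F s r
      = ∫⁻ r in Set.Ioo 0 t, ENNReal.ofReal (rlKernel (c + b) (t - r)) * h r := by
    apply lintegral_congr_ae
    filter_upwards [ae_restrict_mem measurableSet_Ioo] with r hr
    have h1 : ∫⁻ s in Set.Ioo r t, F s r
        = (∫⁻ s in Set.Ioo r t, ENNReal.ofReal (rlKernel c (t - s) * rlKernel b (s - r))) * h r := by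
      rw [← lintegral_mul_const' _ _ (hhfin r)]
      apply setLIntegral_congr_fun measurableSet_Ioo
      intro s hs
      rw [hF]
      simp only
      rw [ENNReal.ofReal_mul (rlKernel_nonneg hc (by linarith [hs.2]))]
      ring
    rw [h1, rlConvL hc hb hr.2]
  rw [hL, hswap, hR]

theorem stmt2 {H : Type*} [NormedAddCommGroup H] [InnerProductSpace ℝ H] [CompleteSpace H]
    (α ν t : ℝ) (hα : 0 < α) (hα1 : α ≤ 1) (hν : 0 < ν) (hν1 : ν ≤ 1) (ht : 0 < t)
    (φ : ℝ → H) (hφ : MemLp φ 2 (volume.restrict (Set.Ioo 0 t))) :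
    fracInt α (fun s => ‖fracInt 1 φ s‖ ^ 2) t ≤
      rlKernel (2 - ν) t * fracInt (1 + α - ν) (fun s => ‖fracInt ν φ s‖ ^ 2) t := by
  rcases eq_or_lt_of_le hν1 with rfl | hν1'
  · rw [show (2:ℝ) - 1 = 1 by norm_num, rlKernel_one, show (1:ℝ) + α - 1 = α by ring, one_mul]
  -- measurable representative, supported in (0, t)
  obtain ⟨g, hgm, hg_ae⟩ : ∃ g : ℝ → H, StronglyMeasurable g
      ∧ φ =ᵐ[volume.restrict (Set.Ioo 0 t)] g :=
    ⟨hφ.1.mk φ, hφ.1.stronglyMeasurable_mk, hφ.1.ae_eq_mk⟩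
  set G : ℝ → H := Set.indicator (Set.Ioo 0 t) g with hGdef
  have hGm : StronglyMeasurable G := hgm.indicator measurableSet_Ioo
  have hφG : φ =ᵐ[volume.restrict (Set.Ioo 0 t)] G := by
    refine hg_ae.trans ?_
    rw [Filter.EventuallyEq, ae_restrict_iff' measurableSet_Ioo]
    exact ae_of_all _ fun x hx => (Set.indicator_of_mem hx g).symm
  have hG2 : MemLp G 2 volume := by
    rw [hGdef, memLp_indicator_iff_restrict measurableSet_Ioo]
    exact hφ.ae_eq hg_ae
  have hGi : Integrable G volume := by
    haveI : Fact (volume (Set.Ioo (0:ℝ) t) < ⊤) := ⟨measure_Ioo_lt_top⟩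
    rw [hGdef, integrable_indicator_iff measurableSet_Ioo]
    exact (hφ.ae_eq hg_ae).integrable (by norm_num)
  -- fracInt agrees on [0, t]
  have hfrac_eq : ∀ a : ℝ, ∀ s ∈ Set.Icc (0:ℝ) t, fracInt a φ s = fracInt a G s := by
    intro a s hs
    rw [fracInt, fracInt, intervalIntegral.integral_of_le hs.1,
      intervalIntegral.integral_of_le hs.1,
      ← setIntegral_congr_set MeasureTheory.Ioo_ae_eq_Ioc,
      ← setIntegral_congr_set MeasureTheory.Ioo_ae_eq_Ioc]
    apply setIntegral_congr_ae measurableSet_Ioo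
    have hsub : Set.Ioo (0:ℝ) s ⊆ Set.Ioo 0 t := fun x hx => ⟨hx.1, lt_of_lt_of_le hx.2 hs.2⟩
    filter_upwards [(ae_restrict_iff' measurableSet_Ioo).1
      (ae_restrict_of_ae_restrict_of_subset hsub hφG)] with u hu hmem
    rw [hu hmem]
  have hgoal_L : fracInt α (fun s => ‖fracInt 1 φ s‖ ^ 2) t
      = fracInt α (fun s => ‖fracInt 1 G s‖ ^ 2) t := by
    rw [fracInt, fracInt]
    apply intervalIntegral.integral_congr
    intro s hs
    rw [Set.uIcc_of_le ht.le] at hs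
    dsimp only
    rw [hfrac_eq 1 s hs]
  have hgoal_R : fracInt (1 + α - ν) (fun s => ‖fracInt ν φ s‖ ^ 2) t
      = fracInt (1 + α - ν) (fun s => ‖fracInt ν G s‖ ^ 2) t := by
    rw [fracInt, fracInt]
    apply intervalIntegral.integral_congr
    intro s hs
    rw [Set.uIcc_of_le ht.le] at hs
    dsimp only
    rw [hfrac_eq ν s hs]
  rw [hgoal_L, hgoal_R]
  set ψ : ℝ → H := fracInt ν G with hψdef
  set Φ : ℝ → H := fracInt 1 G with hΦdef
  have hψm : AEStronglyMeasurable ψ (volume.restrict (Set.Ioo 0 t)) :=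
    (fracInt_aestronglyMeasurable ν G hGm).mono_measure
      (Measure.restrict_mono Set.Ioo_subset_Ioi_self le_rfl)
  have hΦm : AEStronglyMeasurable Φ (volume.restrict (Set.Ioo 0 t)) :=
    (fracInt_aestronglyMeasurable 1 G hGm).mono_measure
      (Measure.restrict_mono Set.Ioo_subset_Ioi_self le_rfl)
  set A := ∫⁻ s in Set.Ioo 0 t, ENNReal.ofReal (rlKernel α (t - s)) * (‖Φ s‖₊ : ENNReal) ^ 2
    with hA
  set B := ∫⁻ r in Set.Ioo 0 t,
      ENNReal.ofReal (rlKernel (1 + α - ν) (t - r)) * (‖ψ r‖₊ : ENNReal) ^ 2 with hB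
  have hψ2meas : AEMeasurable (fun r => (‖ψ r‖₊ : ENNReal) ^ 2)
      (volume.restrict (Set.Ioo 0 t)) := hψm.enorm.pow_const 2
  have hG2meas : AEMeasurable (fun u => (‖G u‖₊ : ENNReal) ^ 2)
      (volume.restrict (Set.Ioo 0 t)) := hGm.aestronglyMeasurable.enorm.pow_const 2
  have hpowfin : ∀ (v : H), ((‖v‖₊ : ENNReal)) ^ 2 ≠ ⊤ :=
    fun v => ENNReal.pow_ne_top ENNReal.coe_ne_top
  -- Claim 1
  have claim1 : ∀ s ∈ Set.Ioo (0:ℝ) t, (‖Φ s‖₊ : ENNReal) ^ 2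
      ≤ ENNReal.ofReal (rlKernel (2 - ν) t)
        * ∫⁻ r in Set.Ioo 0 s,
            ENNReal.ofReal (rlKernel (1 - ν) (s - r)) * (‖ψ r‖₊ : ENNReal) ^ 2 := by
    intro s hs
    have hsg := fracInt_semigroup hν hν1' hs.1 G hGm hGi
    rw [← hψdef, ← hΦdef] at hsg
    have hb : (0:ℝ) < 1 - ν := by linarith
    have hkey := normsq_integral_le hb hs.1 ψ (hψm.mono_measure
      (Measure.restrict_mono (Set.Ioo_subset_Ioo le_rfl hs.2.le) le_rfl))
    rw [show (1 - ν) + 1 = 2 - ν by ring] at hkey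
    calc (‖Φ s‖₊ : ENNReal) ^ 2
        = (‖∫ r in Set.Ioc 0 s, rlKernel (1 - ν) (s - r) • ψ r‖₊ : ENNReal) ^ 2 := by rw [hsg]
      _ ≤ ENNReal.ofReal (rlKernel (2 - ν) s)
          * ∫⁻ r in Set.Ioo 0 s,
              ENNReal.ofReal (rlKernel (1 - ν) (s - r)) * (‖ψ r‖₊ : ENNReal) ^ 2 := hkey
      _ ≤ ENNReal.ofReal (rlKernel (2 - ν) t)
          * ∫⁻ r in Set.Ioo 0 s,
              ENNReal.ofReal (rlKernel (1 - ν) (s - r)) * (‖ψ r‖₊ : ENNReal) ^ 2 :=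
        mul_le_mul' (ENNReal.ofReal_le_ofReal
          (rlKernel_mono (by linarith) hs.1.le hs.2.le)) le_rfl
  -- Claim A
  have claimA : A ≤ ENNReal.ofReal (rlKernel (2 - ν) t) * B := by
    calc A ≤ ∫⁻ s in Set.Ioo 0 t, ENNReal.ofReal (rlKernel α (t - s))
          * (ENNReal.ofReal (rlKernel (2 - ν) t)
            * ∫⁻ r in Set.Ioo 0 s,
                ENNReal.ofReal (rlKernel (1 - ν) (s - r)) * (‖ψ r‖₊ : ENNReal) ^ 2) := by
          rw [hA]
          apply lintegral_mono_ae
          filter_upwards [ae_restrict_mem measurableSet_Ioo] with s hs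
          exact mul_le_mul' le_rfl (claim1 s hs)
      _ = ENNReal.ofReal (rlKernel (2 - ν) t) * ∫⁻ s in Set.Ioo 0 t,
            ENNReal.ofReal (rlKernel α (t - s))
              * ∫⁻ r in Set.Ioo 0 s,
                  ENNReal.ofReal (rlKernel (1 - ν) (s - r)) * (‖ψ r‖₊ : ENNReal) ^ 2 := by
          rw [← lintegral_const_mul' _ _ ENNReal.ofReal_ne_top]
          apply lintegral_congr
          intro s
          ring
      _ = ENNReal.ofReal (rlKernel (2 - ν) t) * ∫⁻ r in Set.Ioo 0 t,
            ENNReal.ofReal (rlKernel (α + (1 - ν)) (t - r)) * (‖ψ r‖₊ : ENNReal) ^ 2 := by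
          exact congrArg (fun z => ENNReal.ofReal (rlKernel (2 - ν) t) * z)
            (chain_bound ht hα (by linarith) _ hψ2meas (fun x => hpowfin _))
      _ = ENNReal.ofReal (rlKernel (2 - ν) t) * B := by
          rw [hB, show α + (1 - ν) = 1 + α - ν by ring]
  -- Claim 3: finiteness of B
  have claim3a : ∀ r ∈ Set.Ioo (0:ℝ) t, (‖ψ r‖₊ : ENNReal) ^ 2
      ≤ ENNReal.ofReal (rlKernel (ν + 1) t)
        * ∫⁻ u in Set.Ioo 0 r,
            ENNReal.ofReal (rlKernel ν (r - u)) * (‖G u‖₊ : ENNReal) ^ 2 := by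
    intro r hr
    have hψr : ψ r = ∫ u in Set.Ioc 0 r, rlKernel ν (r - u) • G u := by
      rw [hψdef, fracInt, intervalIntegral.integral_of_le hr.1.le]
    have hkey := normsq_integral_le hν hr.1 G hGm.aestronglyMeasurable
    calc (‖ψ r‖₊ : ENNReal) ^ 2
        = (‖∫ u in Set.Ioc 0 r, rlKernel ν (r - u) • G u‖₊ : ENNReal) ^ 2 := by rw [hψr]
      _ ≤ ENNReal.ofReal (rlKernel (ν + 1) r)
          * ∫⁻ u in Set.Ioo 0 r,
              ENNReal.ofReal (rlKernel ν (r - u)) * (‖G u‖₊ : ENNReal) ^ 2 := hkey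
      _ ≤ ENNReal.ofReal (rlKernel (ν + 1) t)
          * ∫⁻ u in Set.Ioo 0 r,
              ENNReal.ofReal (rlKernel ν (r - u)) * (‖G u‖₊ : ENNReal) ^ 2 :=
        mul_le_mul' (ENNReal.ofReal_le_ofReal
          (rlKernel_mono (by linarith) hr.1.le hr.2.le)) le_rfl
  have hGsq : (∫⁻ u in Set.Ioo 0 t, (‖G u‖₊ : ENNReal) ^ 2) ≠ ⊤ := by
    have hsq : Integrable (fun u => ‖G u‖ ^ 2) volume := by
      have h0 := hG2.integrable_norm_rpow (by norm_num) (by norm_num)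
      have h2 : ((2:ENNReal)).toReal = (2:ℝ) := by norm_num
      rw [h2] at h0
      have heq : (fun x => ‖G x‖ ^ (2:ℝ)) = fun x => ‖G x‖ ^ 2 := by
        funext x
        rw [show (2:ℝ) = ((2:ℕ):ℝ) by norm_num, Real.rpow_natCast]
      rwa [heq] at h0
    have hfi := hsq.hasFiniteIntegral
    have hfin2 : (∫⁻ u, (‖G u‖₊ : ENNReal) ^ 2 ∂volume) < ⊤ := by
      have hcongr : (∫⁻ u, (‖G u‖₊ : ENNReal) ^ 2 ∂volume)
          = ∫⁻ u, (‖(‖G u‖ ^ 2 : ℝ)‖₊ : ENNReal) ∂volume := by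
        apply lintegral_congr
        intro u
        rw [nnnorm_pow, nnnorm_norm]
        push_cast
        ring
      rw [hcongr]
      exact hfi
    exact ne_of_lt (lt_of_le_of_lt (lintegral_mono' Measure.restrict_le_self (le_refl _)) hfin2)
  have hBfin : B ≠ ⊤ := by
    have hchain := chain_bound ht (show (0:ℝ) < 1 + α - ν by linarith) hν
      (fun u => (‖G u‖₊ : ENNReal) ^ 2) hG2meas (fun x => hpowfin _)
    have hBle : B ≤ ENNReal.ofReal (rlKernel (ν + 1) t)
        * ∫⁻ u in Set.Ioo 0 t,
            ENNReal.ofReal (rlKernel ((1 + α - ν) + ν) (t - u)) * (‖G u‖₊ : ENNReal) ^ 2 := by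
      calc B ≤ ∫⁻ r in Set.Ioo 0 t, ENNReal.ofReal (rlKernel (1 + α - ν) (t - r))
            * (ENNReal.ofReal (rlKernel (ν + 1) t)
              * ∫⁻ u in Set.Ioo 0 r,
                  ENNReal.ofReal (rlKernel ν (r - u)) * (‖G u‖₊ : ENNReal) ^ 2) := by
            rw [hB]
            apply lintegral_mono_ae
            filter_upwards [ae_restrict_mem measurableSet_Ioo] with r hr
            exact mul_le_mul' le_rfl (claim3a r hr)
        _ = ENNReal.ofReal (rlKernel (ν + 1) t) * ∫⁻ r in Set.Ioo 0 t,
              ENNReal.ofReal (rlKernel (1 + α - ν) (t - r))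
                * ∫⁻ u in Set.Ioo 0 r,
                    ENNReal.ofReal (rlKernel ν (r - u)) * (‖G u‖₊ : ENNReal) ^ 2 := by
            rw [← lintegral_const_mul' _ _ ENNReal.ofReal_ne_top]
            apply lintegral_congr
            intro r
            ring
        _ = ENNReal.ofReal (rlKernel (ν + 1) t)
            * ∫⁻ u in Set.Ioo 0 t,
                ENNReal.ofReal (rlKernel ((1 + α - ν) + ν) (t - u)) * (‖G u‖₊ : ENNReal) ^ 2 :=
          congrArg (fun z => ENNReal.ofReal (rlKernel (ν + 1) t) * z) hchain
    have hlast : (∫⁻ u in Set.Ioo 0 t,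
        ENNReal.ofReal (rlKernel ((1 + α - ν) + ν) (t - u)) * (‖G u‖₊ : ENNReal) ^ 2)
          ≤ ENNReal.ofReal (rlKernel (1 + α) t) * ∫⁻ u in Set.Ioo 0 t, (‖G u‖₊ : ENNReal) ^ 2 := by
      rw [← lintegral_const_mul' _ _ ENNReal.ofReal_ne_top]
      apply lintegral_mono_ae
      filter_upwards [ae_restrict_mem measurableSet_Ioo] with u hu
      refine mul_le_mul' (ENNReal.ofReal_le_ofReal ?_) le_rfl
      rw [show (1 + α - ν) + ν = 1 + α by ring]
      exact rlKernel_mono (by linarith) (by linarith [hu.2]) (by linarith [hu.1])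
    refine ne_of_lt (lt_of_le_of_lt (le_trans hBle (mul_le_mul' le_rfl hlast)) ?_)
    exact ENNReal.mul_lt_top ENNReal.ofReal_lt_top
      (ENNReal.mul_lt_top ENNReal.ofReal_lt_top (lt_top_iff_ne_top.2 hGsq))
  -- convert both sides to toReal of lintegrals
  have hconv : ∀ (c : ℝ), 0 < c → ∀ (f : ℝ → H),
      AEStronglyMeasurable f (volume.restrict (Set.Ioo 0 t)) →
      fracInt c (fun s => ‖f s‖ ^ 2) t
        = (∫⁻ s in Set.Ioo 0 t,
            ENNReal.ofReal (rlKernel c (t - s)) * (‖f s‖₊ : ENNReal) ^ 2).toReal := by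
    intro c hc f hf
    rw [fracInt, intervalIntegral.integral_of_le ht.le,
      ← setIntegral_congr_set MeasureTheory.Ioo_ae_eq_Ioc]
    have hnn : 0 ≤ᵐ[volume.restrict (Set.Ioo 0 t)]
        fun s => rlKernel c (t - s) • ‖f s‖ ^ 2 := by
      filter_upwards [ae_restrict_mem measurableSet_Ioo] with s hs
      rw [smul_eq_mul]
      exact mul_nonneg (rlKernel_nonneg hc (by linarith [hs.2])) (sq_nonneg _)
    have hms : AEStronglyMeasurable (fun s => rlKernel c (t - s) • ‖f s‖ ^ 2)
        (volume.restrict (Set.Ioo 0 t)) := by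
      simp_rw [smul_eq_mul]
      exact (((rlKernel_measurable c).comp
        (measurable_const.sub measurable_id)).aemeasurable.mul
        ((hf.norm.aemeasurable).pow_const 2)).aestronglyMeasurable
    rw [MeasureTheory.integral_eq_lintegral_of_nonneg_ae hnn hms]
    congr 1
    apply lintegral_congr_ae
    filter_upwards [ae_restrict_mem measurableSet_Ioo] with s hs
    rw [smul_eq_mul, ENNReal.ofReal_mul (rlKernel_nonneg hc (by linarith [hs.2])),
      ENNReal.ofReal_pow (norm_nonneg _), ofReal_norm, enorm_eq_nnnorm]
  rw [hconv α hα Φ hΦm, hconv (1 + α - ν) (by linarith) ψ hψm, ← hA, ← hB]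
  have hfinal : A.toReal ≤ (ENNReal.ofReal (rlKernel (2 - ν) t) * B).toReal :=
    ENNReal.toReal_mono (ENNReal.mul_ne_top ENNReal.ofReal_ne_top hBfin) claimA
  rw [ENNReal.toReal_mul,
    ENNReal.toReal_ofReal (rlKernel_nonneg (by linarith : (0:ℝ) < 2 - ν) ht.le)] at hfinal
  exact hfinal
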